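/- If a natural number N is a sum of two squares of rational numbers, then N is a sum of two squares of integers. -/

import Mathlib

theorem sum_two_rat_squares_to_int_squares (N : ℕ) (p q : ℚ)
    (h : (N : ℚ) = p ^ 2 + q ^ 2) :
    ∃ u v : ℤ, (N : ℤ) = u ^ 2 + v ^ 2 := by
  rcases Nat.eq_zero_or_pos N with rfl | hN
  · exact ⟨0, 0, by norm_num⟩
  set d : ℕ := p.den * q.den with hd
  have hd0 : d ≠ 0 := Nat.mul_ne_zero p.den_nz q.den_nz
  set a : ℤ := p.num * q.den with ha
  set b : ℤ := q.num * p.den with hb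
  have key : ((d^2 * N : ℕ) : ℤ) = a ^ 2 + b ^ 2 := by
    have := h
    have hp : (p.num : ℚ) = p * p.den := by
      rw [Rat.mul_den_eq_num]
    have hq : (q.num : ℚ) = q * q.den := by
      rw [Rat.mul_den_eq_num]
    have : ((d^2 * N : ℕ) : ℚ) = (a:ℚ) ^ 2 + (b:ℚ) ^ 2 := by
      push_cast [ha, hb, hd, hp, hq]
      ring_nf
      rw [h]; ring
    exact_mod_cast this
  have keyN : d^2 * N = a.natAbs ^ 2 + b.natAbs ^ 2 := by
    have : ((d^2*N : ℕ) : ℤ) = ((a.natAbs :ℤ)) ^ 2 + ((b.natAbs :ℤ)) ^ 2 := by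
      rw [key, ← sq_abs a, ← sq_abs b, Int.abs_eq_natAbs, Int.abs_eq_natAbs]
    exact_mod_cast this
  obtain ⟨x, y, hxy⟩ : ∃ x y : ℕ, N = x ^ 2 + y ^ 2 := by
    rw [Nat.eq_sq_add_sq_iff]
    intro r hr hr3
    have hsum : ∃ x y : ℕ, d^2 * N = x ^ 2 + y ^ 2 := ⟨_, _, keyN⟩
    have he : Even (padicValNat r (d^2 * N)) := Nat.eq_sq_add_sq_iff.mp hsum r (Nat.mem_primeFactors.mpr ⟨Nat.prime_of_mem_primeFactors hr, dvd_mul_of_dvd_right (Nat.dvd_of_mem_primeFactors hr) _, mul_ne_zero (pow_ne_zero 2 hd0) hN.ne'⟩) hr3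
    haveI : Fact r.Prime := ⟨Nat.prime_of_mem_primeFactors hr⟩
    rw [padicValNat.mul (pow_ne_zero 2 hd0) hN.ne', padicValNat.pow d 2] at he
    rcases he with ⟨k, hk⟩
    have : Even (padicValNat r N) := by
      refine ⟨k - padicValNat r d, ?_⟩
      omega
    exact this
  exact ⟨x, y, by exact_mod_cast hxy⟩
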